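/- arXiv:math/0608466 — 4 statements merged into one kernel-verified Lean document; each statement's English description precedes it below -/
import Mathlib

section
/- For all z, w in the open unit disk D = {ζ ∈ ℂ : |ζ| < 1} and all t ∈ [0, 1], (1 − |t z + (1 − t) w|²)/|1 − z̄ w| ≥ 1 − |(z − w)/(1 − z̄ w)|. -/
/-- key inequality from the proof of Lemma 4.1 in Kriete–Moorhouse.
For `z, w` in the open unit disk and `t ∈ [0,1]`,
`(1 − |tz + (1−t)w|²)/|1 − z̄w| ≥ 1 − |(z − w)/(1 − z̄w)|`. -/
theorem stmt_3 (z w : ℂ) (hz : ‖z‖ < 1) (hw : ‖w‖ < 1)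
    (t : ℝ) (ht0 : 0 ≤ t) (ht1 : t ≤ 1) :
    1 - ‖(z - w) / (1 - (starRingEnd ℂ) z * w)‖ ≤
      (1 - ‖(t : ℂ) * z + (1 - (t : ℂ)) * w‖ ^ 2) /
        ‖1 - (starRingEnd ℂ) z * w‖ := by
  set a := ‖z‖ with ha'
  set b := ‖w‖ with hb'
  have ha0 : 0 ≤ a := norm_nonneg z
  have hb0 : 0 ≤ b := norm_nonneg w
  set A := ‖z - w‖ with hA'
  have hA0 : 0 ≤ A := norm_nonneg _
  set c := ‖(t : ℂ) * z + (1 - (t : ℂ)) * w‖ with hc'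
  have hc0 : 0 ≤ c := norm_nonneg _
  set D := ‖1 - (starRingEnd ℂ) z * w‖ with hD'
  have hne : (1 : ℂ) - (starRingEnd ℂ) z * w ≠ 0 := by
    intro h
    have h1 : (starRingEnd ℂ) z * w = 1 := by
      have := sub_eq_zero.mp h; linear_combination -this
    have : ‖(starRingEnd ℂ) z * w‖ = 1 := by rw [h1]; simp
    rw [norm_mul, Complex.norm_conj] at this
    nlinarith
  have hD : 0 < D := norm_pos_iff.mpr hne
  -- |t| = t, |1 - t| = 1 - t
  have et : ‖(t : ℂ)‖ = t := by
    rw [Complex.norm_real, Real.norm_eq_abs]; exact abs_of_nonneg ht0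
  have et' : ‖1 - (t : ℂ)‖ = 1 - t := by
    rw [show (1 - (t : ℂ)) = (((1 - t : ℝ)) : ℂ) by push_cast; ring,
      Complex.norm_real, Real.norm_eq_abs]
    exact abs_of_nonneg (by linarith)
  -- c ≤ t*a + (1-t)*b
  have h2 : c ≤ t * a + (1 - t) * b := by
    calc c ≤ ‖(t : ℂ) * z‖ + ‖(1 - (t : ℂ)) * w‖ :=
          norm_add_le _ _
      _ = t * a + (1 - t) * b := by rw [norm_mul, norm_mul, et, et']
  -- abs (1 - conj z * z) = 1 - a^2, etc.
  have ez : ‖1 - (starRingEnd ℂ) z * z‖ = 1 - a ^ 2 := by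
    rw [show (1 : ℂ) - (starRingEnd ℂ) z * z = (((1 - a ^ 2 : ℝ)) : ℂ) by
      rw [mul_comm, Complex.mul_conj, ← Complex.sq_norm]; push_cast; ring,
      Complex.norm_real, Real.norm_eq_abs]
    exact abs_of_nonneg (by nlinarith)
  have ew : ‖1 - (starRingEnd ℂ) w * w‖ = 1 - b ^ 2 := by
    rw [show (1 : ℂ) - (starRingEnd ℂ) w * w = (((1 - b ^ 2 : ℝ)) : ℂ) by
      rw [mul_comm, Complex.mul_conj, ← Complex.sq_norm]; push_cast; ring,
      Complex.norm_real, Real.norm_eq_abs]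
    exact abs_of_nonneg (by nlinarith)
  -- key decomposition
  have key : (1 : ℂ) - (starRingEnd ℂ) z * w =
      (t : ℂ) * ((1 - (starRingEnd ℂ) z * z) + (starRingEnd ℂ) z * (z - w)) +
      (1 - (t : ℂ)) * ((1 - (starRingEnd ℂ) w * w) +
        ((starRingEnd ℂ) w - (starRingEnd ℂ) z) * w) := by ring
  have h1 : D ≤ t * (1 - a ^ 2) + (1 - t) * (1 - b ^ 2) + (t * a + (1 - t) * b) * A := by
    have e3 : ‖(starRingEnd ℂ) z * (z - w)‖ = a * A := by
      rw [norm_mul, Complex.norm_conj]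
    have e4 : ‖(starRingEnd ℂ) w - (starRingEnd ℂ) z‖ = A := by
      rw [show (starRingEnd ℂ) w - (starRingEnd ℂ) z = (starRingEnd ℂ) (w - z) by
        rw [map_sub], Complex.norm_conj, norm_sub_rev]
    calc D = ‖(t : ℂ) * ((1 - (starRingEnd ℂ) z * z) +
            (starRingEnd ℂ) z * (z - w)) +
          (1 - (t : ℂ)) * ((1 - (starRingEnd ℂ) w * w) +
            ((starRingEnd ℂ) w - (starRingEnd ℂ) z) * w)‖ := by rw [hD', key]
      _ ≤ ‖(t : ℂ) * ((1 - (starRingEnd ℂ) z * z) +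
            (starRingEnd ℂ) z * (z - w))‖ +
          ‖(1 - (t : ℂ)) * ((1 - (starRingEnd ℂ) w * w) +
            ((starRingEnd ℂ) w - (starRingEnd ℂ) z) * w)‖ := norm_add_le _ _
      _ ≤ t * ((1 - a ^ 2) + a * A) + (1 - t) * ((1 - b ^ 2) + A * b) := by
          rw [norm_mul, norm_mul, et, et']
          have b1 : ‖(1 - (starRingEnd ℂ) z * z) + (starRingEnd ℂ) z * (z - w)‖
              ≤ (1 - a ^ 2) + a * A := by
            calc ‖(1 - (starRingEnd ℂ) z * z) + (starRingEnd ℂ) z * (z - w)‖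
                ≤ ‖1 - (starRingEnd ℂ) z * z‖ +
                  ‖(starRingEnd ℂ) z * (z - w)‖ := norm_add_le _ _
              _ = (1 - a ^ 2) + a * A := by rw [ez, e3]
          have b2 : ‖(1 - (starRingEnd ℂ) w * w) +
              ((starRingEnd ℂ) w - (starRingEnd ℂ) z) * w‖ ≤ (1 - b ^ 2) + A * b := by
            calc ‖(1 - (starRingEnd ℂ) w * w) +
                  ((starRingEnd ℂ) w - (starRingEnd ℂ) z) * w‖
                ≤ ‖1 - (starRingEnd ℂ) w * w‖ +
                  ‖((starRingEnd ℂ) w - (starRingEnd ℂ) z) * w‖ :=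
                  norm_add_le _ _
              _ = (1 - b ^ 2) + A * b := by rw [ew, norm_mul, e4]
          have ht1' : (0:ℝ) ≤ 1 - t := by linarith
          exact add_le_add (mul_le_mul_of_nonneg_left b1 ht0)
            (mul_le_mul_of_nonneg_left b2 ht1')
      _ = t * (1 - a ^ 2) + (1 - t) * (1 - b ^ 2) + (t * a + (1 - t) * b) * A := by ring
  have hkey : D - A ≤ 1 - c ^ 2 := by
    nlinarith [sq_nonneg (a - b), mul_nonneg (mul_nonneg ht0 (by linarith : (0:ℝ) ≤ 1 - t))
        (sq_nonneg (a - b)),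
      mul_nonneg (by nlinarith : (0:ℝ) ≤ 1 - (t * a + (1 - t) * b)) hA0,
      mul_le_mul h2 h2 hc0 (by nlinarith : (0:ℝ) ≤ t * a + (1 - t) * b)]
  rw [norm_div]
  rw [show (1 : ℝ) - A / D = (D - A) / D from by field_simp]
  gcongr
end

section
/- Let m denote normalized Lebesgue measure dθ/2π on the unit circle ∂D, let φ, ψ : ∂D → D be measurable functions with values in the open unit disk, let a ∈ (0, 1), and let G ⊆ ∂D be a measurable set on which |(φ − ψ)/(1 − φ̄ ψ)| ≤ a. Fix t ∈ [0, 1] and set φ_t = t φ + (1 − t) ψ. Let ν_t be the pushforward under φ_t of the measure χ_G |φ − ψ|² dm, and let β_t be the pushforward under φ_t of the measure χ_G |(φ − ψ)/(1 − φ̄ ψ)|² dm (both measures on D). Then for every ζ ∈ ∂D and every δ > 0, ν_t(S(ζ, δ)) ≤ (4 δ² / (1 − a)²) · β_t(S(ζ, δ)), where S(ζ, δ) = {z ∈ D : |z − ζ| < δ}. -/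
open Complex MeasureTheory Metric Filter Set Topology
open scoped ENNReal ComplexConjugate Real

/-- Normalized Lebesgue (arclength) measure `dθ/2π` on the unit circle,
as a Borel measure on `ℂ`. -/
noncomputable def circleMeasure : Measure ℂ :=
  Measure.map (fun θ : ℝ => Complex.exp (θ * Complex.I))
    ((ENNReal.ofReal (2 * Real.pi))⁻¹ • volume.restrict (Set.Ioc 0 (2 * Real.pi)))

/-- Carleson-box comparison from the proof of Lemma 4.1 in
Kriete–Moorhouse.  With `ν_t` the pushforward under `φ_t = tφ + (1−t)ψ` of
`χ_G |φ − ψ|² dm` and `β_t` the pushforward of `χ_G ρ² dm`, where `ρ ≤ a < 1` on `G`,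
one has `ν_t(S(ζ,δ)) ≤ (4δ²/(1−a)²) β_t(S(ζ,δ))` for all `ζ ∈ ∂D`, `δ > 0`. -/
theorem stmt_4 (φ ψ : ℂ → ℂ) (hφm : Measurable φ) (hψm : Measurable ψ)
    (hφD : ∀ w ∈ Metric.sphere (0 : ℂ) 1, φ w ∈ Metric.ball (0 : ℂ) 1)
    (hψD : ∀ w ∈ Metric.sphere (0 : ℂ) 1, ψ w ∈ Metric.ball (0 : ℂ) 1)
    (a : ℝ) (ha0 : 0 < a) (ha1 : a < 1)
    (G : Set ℂ) (hG : MeasurableSet G) (hGsub : G ⊆ Metric.sphere (0 : ℂ) 1)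
    (hGa : ∀ w ∈ G,
      ‖(φ w - ψ w) / (1 - (starRingEnd ℂ) (φ w) * ψ w)‖ ≤ a)
    (t : ℝ) (ht0 : 0 ≤ t) (ht1 : t ≤ 1) :
    ∀ ζ : ℂ, ‖ζ‖ = 1 → ∀ δ : ℝ, 0 < δ →
      Measure.map (fun w => (t : ℂ) * φ w + (1 - (t : ℂ)) * ψ w)
          ((circleMeasure.restrict G).withDensity
            fun w => ENNReal.ofReal (‖φ w - ψ w‖ ^ 2))
          (Metric.ball (0 : ℂ) 1 ∩ Metric.ball ζ δ) ≤
        ENNReal.ofReal (4 * δ ^ 2 / (1 - a) ^ 2) *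
          Measure.map (fun w => (t : ℂ) * φ w + (1 - (t : ℂ)) * ψ w)
            ((circleMeasure.restrict G).withDensity
              fun w => ENNReal.ofReal
                (‖(φ w - ψ w) / (1 - (starRingEnd ℂ) (φ w) * ψ w)‖ ^ 2))
            (Metric.ball (0 : ℂ) 1 ∩ Metric.ball ζ δ) := by
  intro ζ hζ δ hδ
  set f : ℂ → ℂ := fun w => (t : ℂ) * φ w + (1 - (t : ℂ)) * ψ w with hf_def
  have hf : Measurable f := (measurable_const.mul hφm).add (measurable_const.mul hψm)
  set S : Set ℂ := Metric.ball (0 : ℂ) 1 ∩ Metric.ball ζ δ with hS_def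
  have hS : MeasurableSet S := measurableSet_ball.inter measurableSet_ball
  have hA : MeasurableSet (f ⁻¹' S) := hf hS
  have hρm : Measurable fun w =>
      ENNReal.ofReal (‖(φ w - ψ w) / (1 - (starRingEnd ℂ) (φ w) * ψ w)‖ ^ 2) := by
    apply Measurable.ennreal_ofReal
    apply Measurable.pow_const
    exact continuous_norm.measurable.comp
      ((hφm.sub hψm).div (measurable_const.sub ((Complex.continuous_conj.measurable.comp hφm).mul hψm)))
  rw [Measure.map_apply hf hS, Measure.map_apply hf hS,
    withDensity_apply _ hA, withDensity_apply _ hA,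
    Measure.restrict_restrict hA,
    ← MeasureTheory.lintegral_const_mul' _ _ ENNReal.ofReal_ne_top]
  refine setLIntegral_mono (measurable_const.mul hρm) ?_
  intro w hw
  obtain ⟨hwA, hwG⟩ := hw
  have hwS := hwA
  have hφb : ‖φ w‖ < 1 := by
    simpa using mem_ball_zero_iff.mp (hφD w (hGsub hwG))
  have hψb : ‖ψ w‖ < 1 := by
    simpa using mem_ball_zero_iff.mp (hψD w (hGsub hwG))
  set ρ := ‖(φ w - ψ w) / (1 - (starRingEnd ℂ) (φ w) * ψ w)‖ with hρ_def
  set D := ‖1 - (starRingEnd ℂ) (φ w) * ψ w‖ with hD_def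
  set d := ‖φ w - ψ w‖ with hd_def
  have hDne : (1 : ℂ) - (starRingEnd ℂ) (φ w) * ψ w ≠ 0 := by
    intro h
    have h1 : (1 : ℂ) = (starRingEnd ℂ) (φ w) * ψ w := by linear_combination h
    have : ‖(starRingEnd ℂ) (φ w) * ψ w‖ < 1 := by
      rw [norm_mul, Complex.norm_conj]
      calc ‖φ w‖ * ‖ψ w‖ ≤ 1 * ‖ψ w‖ := by
            apply mul_le_mul_of_nonneg_right hφb.le (norm_nonneg _)
        _ = ‖ψ w‖ := one_mul _
        _ < 1 := hψb
    rw [← h1] at this; simp at this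
  have hDpos : 0 < D := by
    rw [hD_def]; exact norm_pos_iff.mpr hDne
  have hdρD : d = ρ * D := by
    rw [hρ_def, hd_def, hD_def, norm_div, div_mul_cancel₀]
    exact ne_of_gt (norm_pos_iff.mpr hDne)
  have hρa : ρ ≤ a := hGa w hwG
  -- distance from ζ to f w
  have hfζ : ‖f w - ζ‖ < δ := by
    have : f w ∈ Metric.ball ζ δ := hwS.2
    simpa [Complex.dist_eq] using mem_ball.mp this
  -- |f w - φ w| = (1 - t) d, |f w - ψ w| = t d
  have hfφ : ‖f w - φ w‖ = (1 - t) * d := by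
    have : f w - φ w = (1 - (t : ℂ)) * (ψ w - φ w) := by rw [hf_def]; ring
    rw [this, norm_mul,
      show (1 - (t : ℂ)) = ((1 - t : ℝ) : ℂ) by push_cast; ring, Complex.norm_real, Real.norm_eq_abs,
      _root_.abs_of_nonneg (by linarith : (0:ℝ) ≤ 1 - t),
      show ψ w - φ w = -(φ w - ψ w) from by ring, norm_neg]
  have hfψ : ‖f w - ψ w‖ = t * d := by
    have : f w - ψ w = (t : ℂ) * (φ w - ψ w) := by rw [hf_def]; ring
    rw [this, norm_mul, Complex.norm_real, Real.norm_eq_abs, _root_.abs_of_nonneg ht0]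
  -- |ζ - φ w| ≤ δ + (1-t) d, |ζ - ψ w| ≤ δ + t d
  have hζφ : ‖ζ - φ w‖ ≤ δ + (1 - t) * d := by
    calc ‖ζ - φ w‖ = ‖(ζ - f w) + (f w - φ w)‖ := by ring_nf
      _ ≤ ‖ζ - f w‖ + ‖f w - φ w‖ := norm_add_le _ _
      _ ≤ δ + (1 - t) * d := by
          rw [hfφ, ← norm_neg (ζ - f w)]
          have : -(ζ - f w) = f w - ζ := by ring
          rw [this]; linarith
  have hζψ : ‖ζ - ψ w‖ ≤ δ + t * d := by
    calc ‖ζ - ψ w‖ = ‖(ζ - f w) + (f w - ψ w)‖ := by ring_nf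
      _ ≤ ‖ζ - f w‖ + ‖f w - ψ w‖ := norm_add_le _ _
      _ ≤ δ + t * d := by
          rw [hfψ, ← norm_neg (ζ - f w)]
          have : -(ζ - f w) = f w - ζ := by ring
          rw [this]; linarith
  -- D ≤ |ζ - φ| + |ζ - ψ|
  have hDle : D ≤ ‖ζ - φ w‖ + ‖ζ - ψ w‖ := by
    have key : (1 : ℂ) - (starRingEnd ℂ) (φ w) * ψ w =
        ζ * ((starRingEnd ℂ) ζ - (starRingEnd ℂ) (φ w)) +
          (starRingEnd ℂ) (φ w) * (ζ - ψ w) := by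
      have hn : Complex.normSq ζ = 1 := by
        rw [Complex.normSq_eq_norm_sq, hζ]; norm_num
      have hζ1 : ζ * (starRingEnd ℂ) ζ = 1 := by
        rw [Complex.mul_conj, hn, Complex.ofReal_one]
      linear_combination -hζ1
    rw [hD_def, key]
    calc ‖ζ * ((starRingEnd ℂ) ζ - (starRingEnd ℂ) (φ w)) +
          (starRingEnd ℂ) (φ w) * (ζ - ψ w)‖
        ≤ ‖ζ * ((starRingEnd ℂ) ζ - (starRingEnd ℂ) (φ w))‖ +
            ‖(starRingEnd ℂ) (φ w) * (ζ - ψ w)‖ := norm_add_le _ _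
      _ ≤ ‖ζ - φ w‖ + ‖ζ - ψ w‖ := by
          gcongr
          · rw [norm_mul, hζ, one_mul, ← map_sub, Complex.norm_conj]
          · rw [norm_mul, Complex.norm_conj]
            calc ‖φ w‖ * ‖ζ - ψ w‖
                ≤ 1 * ‖ζ - ψ w‖ := by
                  apply mul_le_mul_of_nonneg_right hφb.le (norm_nonneg _)
              _ = ‖ζ - ψ w‖ := one_mul _
  -- D ≤ 2δ + d ≤ 2δ + a D, hence D ≤ 2δ/(1-a)
  have hD2 : D * (1 - a) ≤ 2 * δ := by
    have h1 : D ≤ 2 * δ + d := by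
      have := hDle.trans (add_le_add hζφ hζψ)
      nlinarith [norm_nonneg (φ w - ψ w)]
    have h2 : d ≤ a * D := by
      rw [hdρD]; exact mul_le_mul_of_nonneg_right hρa hDpos.le
    nlinarith
  have hDfin : D ≤ 2 * δ / (1 - a) := by
    rw [le_div_iff₀ (by linarith)]; linarith
  -- final pointwise bound
  have hkey : d ^ 2 ≤ 4 * δ ^ 2 / (1 - a) ^ 2 * ρ ^ 2 := by
    have hρ0 : 0 ≤ ρ := norm_nonneg _
    have h1a : (0:ℝ) < 1 - a := by linarith
    have hDsq : D ^ 2 ≤ (2 * δ / (1 - a)) ^ 2 := by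
      apply sq_le_sq' _ hDfin
      nlinarith
    calc d ^ 2 = ρ ^ 2 * D ^ 2 := by rw [hdρD]; ring
      _ ≤ ρ ^ 2 * (2 * δ / (1 - a)) ^ 2 := by
          apply mul_le_mul_of_nonneg_left hDsq (sq_nonneg _)
      _ = 4 * δ ^ 2 / (1 - a) ^ 2 * ρ ^ 2 := by field_simp; ring
  calc ENNReal.ofReal (d ^ 2) ≤ ENNReal.ofReal (4 * δ ^ 2 / (1 - a) ^ 2 * ρ ^ 2) :=
        ENNReal.ofReal_le_ofReal hkey
    _ = ENNReal.ofReal (4 * δ ^ 2 / (1 - a) ^ 2) * ENNReal.ofReal (ρ ^ 2) := by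
        rw [ENNReal.ofReal_mul (by positivity)]
end

section
/- For every a ∈ (0, 1) there exists a constant c > 0 such that for all z, w in the open unit disk D with |(z − w)/(1 − z̄ w)| ≤ a, all t ∈ [0, 1], all r ∈ (0, 1), and all α ∈ ℂ with |α| = 1, one has |α − r(t z + (1 − t) w)| ≥ c · max{ |α − r z|, |α − r w| }. -/
open Complex

set_option maxHeartbeats 2000000

private lemma sq_le_aux (x q : ℝ) (hx : 0 ≤ x) (hq : 0 ≤ q) (h : x^2 ≤ q^2) : x ≤ q := by
  nlinarith

/-- Core estimate in normalized coordinates (`α = 1`), for `t ≥ 1/2`. -/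
private lemma half_key (a : ℝ) (ha0 : 0 < a) (ha1 : a < 1) (A B : ℂ)
    (hA : ‖A‖ ≤ 1) (hB : ‖B‖ ≤ 1)
    (hcon : ‖(A - B)‖ ≤ a * ‖(1 - (starRingEnd ℂ) A * B)‖)
    (t : ℝ) (ht : 1/2 ≤ t) (ht1 : t ≤ 1) :
    (1-a)^2/200 * max (‖(1 - A)‖) (‖(1 - B)‖) ≤
      ‖(1 - ((t:ℂ)*A + (1-(t:ℂ))*B))‖ := by
  by_contra hcontra
  push_neg at hcontra
  have h1a : 0 < 1 - a := by linarith
  set c : ℝ := (1-a)^2/200 with hc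
  set M : ℝ := max (‖(1 - A)‖) (‖(1 - B)‖) with hM
  set ζ : ℂ := 1 - ((t:ℂ)*A + (1-(t:ℂ))*B) with hζ
  clear_value c M ζ
  have hc0 : 0 < c := by rw [hc]; positivity
  have hA1 : A.re^2 + A.im^2 ≤ 1 := by
    have h1 := Complex.sq_norm A
    have h2 : ‖A‖ ^ 2 ≤ 1 := by nlinarith [norm_nonneg A]
    rw [Complex.normSq_apply] at h1
    nlinarith
  have hB1 : B.re^2 + B.im^2 ≤ 1 := by
    have h1 := Complex.sq_norm B
    have h2 : ‖B‖ ^ 2 ≤ 1 := by nlinarith [norm_nonneg B]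
    rw [Complex.normSq_apply] at h1
    nlinarith
  have hsq1 : ‖(1 - A)‖^2 ≤ 2 * (1 - A).re := by
    rw [Complex.sq_norm, Complex.normSq_apply]
    simp only [Complex.sub_re, Complex.sub_im, Complex.one_re, Complex.one_im]
    nlinarith [hA1]
  have hsq2 : ‖(1 - B)‖^2 ≤ 2 * (1 - B).re := by
    rw [Complex.sq_norm, Complex.normSq_apply]
    simp only [Complex.sub_re, Complex.sub_im, Complex.one_re, Complex.one_im]
    nlinarith [hB1]
  have hx1nn : 0 ≤ (1 - A).re := by linarith [hsq1, sq_nonneg (‖(1-A)‖)]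
  have hx2nn : 0 ≤ (1 - B).re := by linarith [hsq2, sq_nonneg (‖(1-B)‖)]
  have hre : ζ.re = t * (1 - A).re + (1-t) * (1 - B).re := by
    rw [hζ]
    simp only [Complex.sub_re, Complex.add_re, Complex.mul_re, Complex.one_re,
      Complex.one_im, Complex.ofReal_re, Complex.ofReal_im, Complex.sub_im]
    ring
  have hζabs : ζ.re ≤ ‖ζ‖ := Complex.re_le_norm ζ
  have hζM : ‖ζ‖ < c * M := hcontra
  have hx1b : (1 - A).re < 2*(c*M) := by
    have s0 : 0 ≤ (1-t) * (1 - B).re :=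
      mul_nonneg (by linarith) hx2nn
    have s1 : 1/2 * (1 - A).re ≤ t * (1 - A).re :=
      mul_le_mul_of_nonneg_right ht hx1nn
    linarith
  have hP4 : ‖(1-A)‖^2 ≤ 4*(c*M) := by linarith [hsq1, hx1b]
  have hMA : ‖(1-A)‖ ≤ M := by rw [hM]; exact le_max_left _ _
  have hMB : ‖(1-B)‖ ≤ M := by rw [hM]; exact le_max_right _ _
  have hMnn : 0 ≤ M := le_trans (norm_nonneg _) hMA
  have hM2 : M ≤ 2 := by
    have e1 : ‖((1:ℂ) - A)‖ ≤ 2 := by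
      have := norm_sub_le (1:ℂ) A
      rw [norm_one] at this; linarith
    have e2 : ‖((1:ℂ) - B)‖ ≤ 2 := by
      have := norm_sub_le (1:ℂ) B
      rw [norm_one] at this; linarith
    rw [hM]; exact max_le e1 e2
  -- algebraic identity for 1 - conj A * B
  have h2re : ((2*(1 - A).re : ℝ) : ℂ) = (1 - A) + (starRingEnd ℂ) (1 - A) :=
    (Complex.add_conj _).symm
  have hid : 1 - (starRingEnd ℂ) A * B
      = (A - B) + ((2*(1 - A).re : ℝ) : ℂ) - (starRingEnd ℂ) (1 - A) * (1 - B) := by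
    rw [h2re, map_sub, map_one]
    ring
  have htri : ‖(1 - (starRingEnd ℂ) A * B)‖
      ≤ ‖(A - B)‖ + 2*(1 - A).re + ‖(1-A)‖ * ‖(1-B)‖ := by
    rw [hid]
    calc ‖((A - B) + ((2*(1 - A).re : ℝ) : ℂ) - (starRingEnd ℂ) (1 - A) * (1 - B))‖
        ≤ ‖((A - B) + ((2*(1 - A).re : ℝ) : ℂ))‖
          + ‖((starRingEnd ℂ) (1 - A) * (1 - B))‖ := norm_sub_le _ _
      _ ≤ (‖(A - B)‖ + ‖(((2*(1 - A).re : ℝ) : ℂ))‖)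
          + ‖((starRingEnd ℂ) (1 - A) * (1 - B))‖ := by
          have := norm_add_le (A - B) (((2*(1 - A).re : ℝ) : ℂ)); linarith
      _ = ‖(A - B)‖ + 2*(1 - A).re + ‖(1-A)‖ * ‖(1-B)‖ := by
          rw [norm_mul, Complex.norm_conj, Complex.norm_real, Real.norm_eq_abs,
            _root_.abs_of_nonneg (by linarith : (0:ℝ) ≤ 2*(1-A).re)]
  -- lower bound for |A - B|
  have eA : (1:ℂ) - A = ζ + ((1-t : ℝ):ℂ) * (B - A) := by rw [hζ]; push_cast; ring
  have eB : (1:ℂ) - B = ζ + ((t : ℝ):ℂ) * (A - B) := by rw [hζ]; push_cast; ring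
  have hlA : ‖(1 - A)‖ < c*M + ‖(A - B)‖ := by
    have s1 : ‖(1 - A)‖ ≤ ‖ζ‖ + ‖(((1-t : ℝ):ℂ) * (B - A))‖ := by
      rw [eA]; exact norm_add_le _ _
    have s2 : ‖(((1-t : ℝ):ℂ) * (B - A))‖ ≤ ‖(A - B)‖ := by
      rw [norm_mul, Complex.norm_real, Real.norm_eq_abs, _root_.abs_of_nonneg (by linarith : (0:ℝ) ≤ 1-t),
        norm_sub_rev B A]
      exact mul_le_of_le_one_left (norm_nonneg (A - B)) (by linarith)
    linarith
  have hlB : ‖(1 - B)‖ < c*M + ‖(A - B)‖ := by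
    have s1 : ‖(1 - B)‖ ≤ ‖ζ‖ + ‖(((t : ℝ):ℂ) * (A - B))‖ := by
      rw [eB]; exact norm_add_le _ _
    have s2 : ‖(((t : ℝ):ℂ) * (A - B))‖ ≤ ‖(A - B)‖ := by
      rw [norm_mul, Complex.norm_real, Real.norm_eq_abs, _root_.abs_of_nonneg (by linarith : (0:ℝ) ≤ t)]
      exact mul_le_of_le_one_left (norm_nonneg (A - B)) ht1
    linarith
  have hE1 : (1 - c)*M < ‖(A - B)‖ := by
    have h5 : M < c*M + ‖(A - B)‖ := by
      have := max_lt hlA hlB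
      rw [← hM] at this
      exact this
    linarith [h5]
  -- upper bound
  have hE2 : (1-a) * ‖(A - B)‖ ≤ 4*(c*M) + ‖(1-A)‖ * M := by
    have s1 : ‖(A - B)‖
        ≤ a * (‖(A-B)‖ + 2*(1-A).re + ‖(1-A)‖*‖(1-B)‖) :=
      hcon.trans (mul_le_mul_of_nonneg_left htri ha0.le)
    have b1 : a*(2*(1-A).re) ≤ 2*(1-A).re :=
      mul_le_of_le_one_left (by linarith) ha1.le
    have b2 : a*(‖(1-A)‖*‖(1-B)‖) ≤ ‖(1-A)‖ * M := by
      have p1 : ‖(1-A)‖*‖(1-B)‖ ≤ ‖(1-A)‖*M :=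
        mul_le_mul_of_nonneg_left hMB (norm_nonneg _)
      have p2 : a*(‖(1-A)‖*‖(1-B)‖) ≤ ‖(1-A)‖*‖(1-B)‖ :=
        mul_le_of_le_one_left
          (mul_nonneg (norm_nonneg (1-A)) (norm_nonneg (1-B))) ha1.le
      linarith
    linarith [s1, b1, b2, hx1b]
  -- |1-A| is small
  have hc8 : ‖(1-A)‖^2 ≤ (1-a)^2/25 := by
    have h8 : 4*(c*M) ≤ 8*c := by
      have := mul_le_mul_of_nonneg_left hM2 hc0.le
      linarith
    have h9 : (8:ℝ)*c = (1-a)^2/25 := by rw [hc]; ring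
    linarith [hP4]
  have hP1le : ‖(1-A)‖ ≤ (1-a)/5 := by
    have hq : ‖(1-A)‖^2 ≤ ((1-a)/5)^2 := by
      have : ((1-a)/5)^2 = (1-a)^2/25 := by ring
      linarith [hc8]
    exact sq_le_aux _ _ (norm_nonneg _) (by linarith) hq
  -- contradiction
  have hfin1 : (1-a)*((1-c)*M) < (1-a)*‖(A-B)‖ :=
    mul_lt_mul_of_pos_left hE1 h1a
  have hfin2 : ‖(1-A)‖ * M ≤ (1-a)/5 * M :=
    mul_le_mul_of_nonneg_right hP1le hMnn
  have keystrict : (1-a)*((1-c)*M) < 4*(c*M) + (1-a)/5*M := by linarith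
  have hBpos : 0 < (1-a)*(1-c) - 4*c - (1-a)/5 := by
    have hb1 : (1-a)^2 ≤ (1-a) := by
      rw [sq]
      exact mul_le_of_le_one_left h1a.le (by linarith)
    have hb2 : (1-a)^3 ≤ (1-a)^2 := by
      rw [pow_succ]
      exact mul_le_of_le_one_right (sq_nonneg _) (by linarith)
    rw [hc]
    linarith [hb1, hb2, h1a]
  linarith [keystrict, mul_nonneg hMnn hBpos.le]

/-- Core estimate in normalized coordinates (`α = 1`), all `t ∈ [0,1]`. -/
private lemma key_full (a : ℝ) (ha0 : 0 < a) (ha1 : a < 1) (A B : ℂ)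
    (hA : ‖A‖ ≤ 1) (hB : ‖B‖ ≤ 1)
    (hcon : ‖(A - B)‖ ≤ a * ‖(1 - (starRingEnd ℂ) A * B)‖)
    (t : ℝ) (ht0 : 0 ≤ t) (ht1 : t ≤ 1) :
    (1-a)^2/200 * max (‖(1 - A)‖) (‖(1 - B)‖) ≤
      ‖(1 - ((t:ℂ)*A + (1-(t:ℂ))*B))‖ := by
  rcases le_total (1/2 : ℝ) t with h | h
  · exact half_key a ha0 ha1 A B hA hB hcon t h ht1
  · have hsym : ‖(B - A)‖ ≤ a * ‖(1 - (starRingEnd ℂ) B * A)‖ := by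
      have e1 : ‖(B - A)‖ = ‖(A - B)‖ := norm_sub_rev B A
      have e2 : ‖(1 - (starRingEnd ℂ) B * A)‖
          = ‖(1 - (starRingEnd ℂ) A * B)‖ := by
        rw [show (1 : ℂ) - (starRingEnd ℂ) B * A
            = (starRingEnd ℂ) (1 - (starRingEnd ℂ) A * B) by
          rw [map_sub, map_one, map_mul, Complex.conj_conj]; ring, Complex.norm_conj]
      rw [e1, e2]; exact hcon
    have h2 := half_key a ha0 ha1 B A hB hA hsym (1-t) (by linarith) (by linarith)
    have e3 : (1:ℂ) - ((((1-t:ℝ)):ℂ)*B + (1-(((1-t:ℝ)):ℂ))*A)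
        = 1 - ((t:ℂ)*A + (1-(t:ℂ))*B) := by push_cast; ring
    rw [e3] at h2
    rw [show max (‖(1-A)‖) (‖(1-B)‖)
        = max (‖(1-B)‖) (‖(1-A)‖) from max_comm _ _]
    exact h2

/-- comparison of denominators from the proof of Lemma 4.2 in
Kriete–Moorhouse. For every `a ∈ (0,1)` there is `c > 0` such that for all `z, w`
in the unit disk at pseudo-hyperbolic distance at most `a`, all `t ∈ [0,1]`,
`r ∈ (0,1)` and unimodular `α`,
`|α − r(tz + (1−t)w)| ≥ c · max{|α − rz|, |α − rw|}`. -/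
theorem stmt_5 (a : ℝ) (ha0 : 0 < a) (ha1 : a < 1) :
    ∃ c : ℝ, 0 < c ∧ ∀ z w : ℂ, ‖z‖ < 1 → ‖w‖ < 1 →
      ‖(z - w) / (1 - (starRingEnd ℂ) z * w)‖ ≤ a →
      ∀ t : ℝ, 0 ≤ t → t ≤ 1 → ∀ r : ℝ, 0 < r → r < 1 →
      ∀ α : ℂ, ‖α‖ = 1 →
      c * max (‖α - (r : ℂ) * z‖) (‖α - (r : ℂ) * w‖) ≤
        ‖α - (r : ℂ) * ((t : ℂ) * z + (1 - (t : ℂ)) * w)‖ := by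
  have h1a : 0 < 1 - a := by linarith
  have hc'0 : 0 < (1-a)^2/200 := div_pos (pow_pos h1a 2) (by norm_num)
  refine ⟨((1-a)^2/200) / (2 + (1-a)^2/200), div_pos hc'0 (by linarith), ?_⟩
  intro z w hz hw hpc t ht0 ht1 r hr0 hr1 α hα
  have hne : (1 : ℂ) - (starRingEnd ℂ) z * w ≠ 0 := by
    intro h
    have h1 : (starRingEnd ℂ) z * w = 1 := by linear_combination -h
    have h2 : ‖((starRingEnd ℂ) z * w)‖ = 1 := by rw [h1, norm_one]
    rw [norm_mul, Complex.norm_conj] at h2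
    nlinarith [norm_nonneg z, norm_nonneg w]
  have hcon' : ‖(z - w)‖ ≤ a * ‖(1 - (starRingEnd ℂ) z * w)‖ := by
    rw [norm_div] at hpc
    exact (div_le_iff₀ (norm_pos_iff.mpr hne)).mp hpc
  have hαα : (starRingEnd ℂ) α * α = 1 := by
    rw [← Complex.normSq_eq_conj_mul_self, Complex.normSq_eq_norm_sq, hα]
    norm_num
  set A := (starRingEnd ℂ) α * z with hAdef
  set B := (starRingEnd ℂ) α * w with hBdef
  clear_value A B
  have hA : ‖A‖ ≤ 1 := by
    rw [hAdef, norm_mul, Complex.norm_conj, hα, one_mul]; exact hz.le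
  have hB : ‖B‖ ≤ 1 := by
    rw [hBdef, norm_mul, Complex.norm_conj, hα, one_mul]; exact hw.le
  have hconAB : ‖(A - B)‖ ≤ a * ‖(1 - (starRingEnd ℂ) A * B)‖ := by
    have e1 : A - B = (starRingEnd ℂ) α * (z - w) := by rw [hAdef, hBdef]; ring
    have e2 : (1:ℂ) - (starRingEnd ℂ) A * B = 1 - (starRingEnd ℂ) z * w := by
      rw [hAdef, hBdef, map_mul, Complex.conj_conj]
      linear_combination (-(starRingEnd ℂ) z * w) * hαα
    rw [e1, e2, norm_mul, Complex.norm_conj, hα, one_mul]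
    exact hcon'
  have hkey := key_full a ha0 ha1 A B hA hB hconAB t ht0 ht1
  set U : ℂ := (t:ℂ)*A + (1-(t:ℂ))*B with hUdef
  clear_value U
  have hU1 : ‖U‖ ≤ 1 := by
    have c1 : ‖((t:ℂ))‖ = t := by rw [Complex.norm_real, Real.norm_eq_abs, _root_.abs_of_nonneg ht0]
    have c2 : ‖((1:ℂ)-(t:ℂ))‖ = 1 - t := by
      rw [show (1:ℂ)-(t:ℂ) = ((1-t : ℝ):ℂ) by push_cast; ring, Complex.norm_real, Real.norm_eq_abs,
        _root_.abs_of_nonneg (by linarith)]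
    calc ‖U‖ ≤ ‖((t:ℂ)*A)‖ + ‖((1-(t:ℂ))*B)‖ := by
          rw [hUdef]; exact norm_add_le _ _
      _ ≤ t*1 + (1-t)*1 := by
          rw [norm_mul, norm_mul, c1, c2]
          exact add_le_add (mul_le_mul_of_nonneg_left hA ht0)
            (mul_le_mul_of_nonneg_left hB (by linarith))
      _ = 1 := by ring
  -- rewrite goal in normalized coordinates
  have habs1 : ‖(α - (r:ℂ)*z)‖ = ‖(1 - (r:ℂ)*A)‖ := by
    rw [show (1:ℂ) - (r:ℂ)*A = (starRingEnd ℂ) α * (α - (r:ℂ)*z) by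
      rw [mul_sub, hαα, hAdef]; ring, norm_mul, Complex.norm_conj, hα, one_mul]
  have habs2 : ‖(α - (r:ℂ)*w)‖ = ‖(1 - (r:ℂ)*B)‖ := by
    rw [show (1:ℂ) - (r:ℂ)*B = (starRingEnd ℂ) α * (α - (r:ℂ)*w) by
      rw [mul_sub, hαα, hBdef]; ring, norm_mul, Complex.norm_conj, hα, one_mul]
  have habs3 : ‖(α - (r:ℂ)*((t:ℂ)*z + (1-(t:ℂ))*w))‖
      = ‖(1 - (r:ℂ)*U)‖ := by
    rw [show (1:ℂ) - (r:ℂ)*U = (starRingEnd ℂ) α * (α - (r:ℂ)*((t:ℂ)*z + (1-(t:ℂ))*w)) by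
      rw [mul_sub, hαα, hUdef, hAdef, hBdef]; ring, norm_mul, Complex.norm_conj, hα, one_mul]
  rw [habs1, habs2, habs3]
  -- real-variable endgame
  have hrU : ‖((r:ℂ)*U)‖ ≤ r := by
    rw [norm_mul, Complex.norm_real, Real.norm_eq_abs, _root_.abs_of_nonneg hr0.le]
    exact mul_le_of_le_one_right hr0.le hU1
  have hX1 : 1 - r ≤ ‖(1 - (r:ℂ)*U)‖ := by
    have t2 : (1:ℝ) ≤ ‖(1 - (r:ℂ)*U)‖ + ‖((r:ℂ)*U)‖ := by
      calc (1:ℝ) = ‖((1 - (r:ℂ)*U) + (r:ℂ)*U)‖ := by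
            rw [show (1 - (r:ℂ)*U) + (r:ℂ)*U = 1 by ring, norm_one]
        _ ≤ _ := norm_add_le _ _
    linarith
  have hX2 : ‖(1 - U)‖ ≤ 2 * ‖(1 - (r:ℂ)*U)‖ := by
    have e : (1:ℂ) - U = (1 - (r:ℂ)*U) - ((1-r:ℝ):ℂ)*U := by push_cast; ring
    have s1 : ‖(((1-r:ℝ):ℂ)*U)‖ ≤ 1 - r := by
      rw [norm_mul, Complex.norm_real, Real.norm_eq_abs, _root_.abs_of_nonneg (by linarith : (0:ℝ) ≤ 1-r)]
      exact mul_le_of_le_one_right (by linarith) hU1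
    calc ‖(1-U)‖
        ≤ ‖(1 - (r:ℂ)*U)‖ + ‖(((1-r:ℝ):ℂ)*U)‖ := by
          rw [e]; exact norm_sub_le _ _
      _ ≤ 2 * ‖(1 - (r:ℂ)*U)‖ := by linarith
  have hY1 : ‖(1 - (r:ℂ)*A)‖ ≤ (1-r) + ‖(1 - A)‖ := by
    have e : (1:ℂ) - (r:ℂ)*A = ((1-r:ℝ):ℂ)*A + (1 - A) := by push_cast; ring
    have s1 : ‖(((1-r:ℝ):ℂ)*A)‖ ≤ 1 - r := by
      rw [norm_mul, Complex.norm_real, Real.norm_eq_abs, _root_.abs_of_nonneg (by linarith : (0:ℝ) ≤ 1-r)]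
      exact mul_le_of_le_one_right (by linarith) hA
    calc ‖(1 - (r:ℂ)*A)‖
        ≤ ‖(((1-r:ℝ):ℂ)*A)‖ + ‖(1 - A)‖ := by
          rw [e]; exact norm_add_le _ _
      _ ≤ (1-r) + ‖(1 - A)‖ := by linarith
  have hY2 : ‖(1 - (r:ℂ)*B)‖ ≤ (1-r) + ‖(1 - B)‖ := by
    have e : (1:ℂ) - (r:ℂ)*B = ((1-r:ℝ):ℂ)*B + (1 - B) := by push_cast; ring
    have s1 : ‖(((1-r:ℝ):ℂ)*B)‖ ≤ 1 - r := by
      rw [norm_mul, Complex.norm_real, Real.norm_eq_abs, _root_.abs_of_nonneg (by linarith : (0:ℝ) ≤ 1-r)]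
      exact mul_le_of_le_one_right (by linarith) hB
    calc ‖(1 - (r:ℂ)*B)‖
        ≤ ‖(((1-r:ℝ):ℂ)*B)‖ + ‖(1 - B)‖ := by
          rw [e]; exact norm_add_le _ _
      _ ≤ (1-r) + ‖(1 - B)‖ := by linarith
  have hmaxr : max (‖(1 - (r:ℂ)*A)‖) (‖(1 - (r:ℂ)*B)‖)
      ≤ (1-r) + max (‖(1-A)‖) (‖(1-B)‖) :=
    max_le (hY1.trans (add_le_add_right (le_max_left _ _) _))
      (hY2.trans (add_le_add_right (le_max_right _ _) _))
  have hkey2 : (1-a)^2/200 * max (‖(1-A)‖) (‖(1-B)‖)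
      ≤ 2 * ‖(1 - (r:ℂ)*U)‖ := hkey.trans hX2
  rw [div_mul_eq_mul_div, div_le_iff₀ (by linarith : (0:ℝ) < 2 + (1-a)^2/200)]
  have hstep : ((1-a)^2/200) * (max (‖(1 - (r:ℂ)*A)‖) (‖(1 - (r:ℂ)*B)‖))
      ≤ ((1-a)^2/200) * ((1-r) + max (‖(1-A)‖) (‖(1-B)‖)) :=
    mul_le_mul_of_nonneg_left hmaxr hc'0.le
  have hstep2 : ((1-a)^2/200) * (1-r) ≤ ((1-a)^2/200) * ‖(1 - (r:ℂ)*U)‖ :=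
    mul_le_mul_of_nonneg_left hX1 hc'0.le
  linarith [hstep, hstep2, hkey2]
end

section
/- Let m ≥ 1 be an integer and let u and v be complex-valued functions defined on a punctured real interval (−ε, ε) \ {0} satisfying u(x) = Σ_{j=1}^{2m} a_j x^j + o(x^{2m}) and v(x) = Σ_{j=1}^{2m} b_j x^j + o(x^{2m}) as x → 0, where a_j = b_j is real for 1 ≤ j ≤ 2m − 1, Im a_{2m} > 0, and Im b_{2m} > 0. Then lim_{x→0} |u(x) − v(x)| / |u(x) − conj(v(x))| = |a_{2m} − b_{2m}| / |a_{2m} − conj(b_{2m})|, and this limit is strictly less than 1. -/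
open Filter Asymptotics Topology

lemma aux_tendsto_div {f : ℝ → ℂ} {c : ℂ} {n : ℕ}
    (h : (fun x : ℝ => f x - c * (x : ℂ) ^ n) =o[𝓝[≠] (0 : ℝ)] fun x : ℝ => x ^ n) :
    Tendsto (fun x : ℝ => f x / (x : ℂ) ^ n) (𝓝[≠] (0 : ℝ)) (𝓝 c) := by
  have hO : (fun x : ℝ => (x : ℝ) ^ n) =O[𝓝[≠] (0 : ℝ)] fun x : ℝ => (x : ℂ) ^ n :=
    isBigO_of_le _ fun x => by
      simp [norm_pow, Complex.norm_real, Real.norm_eq_abs, abs_pow]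
  have h2 := (h.trans_isBigO hO).tendsto_div_nhds_zero
  have h3 : Tendsto (fun x : ℝ => (f x - c * (x : ℂ) ^ n) / (x : ℂ) ^ n + c)
      (𝓝[≠] (0 : ℝ)) (𝓝 (0 + c)) := h2.add tendsto_const_nhds
  rw [zero_add] at h3
  refine h3.congr' ?_
  filter_upwards [eventually_mem_nhdsWithin] with x hx
  have hx0 : ((x : ℂ)) ^ n ≠ 0 := pow_ne_zero _ (by exact_mod_cast (by simpa using hx : x ≠ 0))
  field_simp
  ring

/-- computational core of Proposition 5.10(b) in Kriete–Moorhouse.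
If `u(x) = Σ_{j=1}^{2m} a_j x^j + o(x^{2m})` and `v(x) = Σ_{j=1}^{2m} b_j x^j + o(x^{2m})`
as `x → 0` in `ℝ \ {0}`, where `a_j = b_j` is real for `1 ≤ j ≤ 2m−1` and
`Im a_{2m} > 0 < Im b_{2m}`, then `|u − v|/|u − conj v| → |a_{2m} − b_{2m}|/|a_{2m} − conj b_{2m}| < 1`. -/
theorem stmt_15 (m : ℕ) (hm : 1 ≤ m) (u v : ℝ → ℂ) (a b : ℕ → ℂ)
    (hu : (fun x : ℝ => u x - ∑ j ∈ Finset.Icc 1 (2 * m), a j * (x : ℂ) ^ j)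
      =o[𝓝[≠] (0 : ℝ)] fun x : ℝ => x ^ (2 * m))
    (hv : (fun x : ℝ => v x - ∑ j ∈ Finset.Icc 1 (2 * m), b j * (x : ℂ) ^ j)
      =o[𝓝[≠] (0 : ℝ)] fun x : ℝ => x ^ (2 * m))
    (hreal : ∀ j, 1 ≤ j → j ≤ 2 * m - 1 → (a j).im = 0 ∧ a j = b j)
    (ha : 0 < (a (2 * m)).im) (hb : 0 < (b (2 * m)).im) :
    Tendsto
      (fun x : ℝ => ‖u x - v x‖ / ‖u x - (starRingEnd ℂ) (v x)‖)
      (𝓝[≠] (0 : ℝ))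
      (𝓝 (‖a (2 * m) - b (2 * m)‖ /
        ‖a (2 * m) - (starRingEnd ℂ) (b (2 * m))‖)) ∧
    ‖a (2 * m) - b (2 * m)‖ /
        ‖a (2 * m) - (starRingEnd ℂ) (b (2 * m))‖ < 1 := by
  set n := 2 * m with hn
  set c := a n - b n with hc
  set d := a n - (starRingEnd ℂ) (b n) with hd
  have hmem : n ∈ Finset.Icc 1 n := Finset.mem_Icc.mpr ⟨by omega, le_refl n⟩
  -- facts about lower coefficients
  have hlow : ∀ j ∈ Finset.Icc 1 n, j ≠ n → a j = b j ∧ (starRingEnd ℂ) (b j) = b j := by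
    intro j hj hjn
    obtain ⟨h1, h2⟩ := Finset.mem_Icc.mp hj
    obtain ⟨him, hab⟩ := hreal j h1 (by omega)
    exact ⟨hab, Complex.conj_eq_iff_im.mpr (by rw [← hab]; exact him)⟩
  -- sum identity 1
  have hsum1 : ∀ x : ℝ, (∑ j ∈ Finset.Icc 1 n, a j * (x : ℂ) ^ j)
      - (∑ j ∈ Finset.Icc 1 n, b j * (x : ℂ) ^ j) = c * (x : ℂ) ^ n := by
    intro x
    rw [← Finset.sum_sub_distrib]
    rw [Finset.sum_eq_single_of_mem n hmem (fun j hj hjn => by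
      rw [(hlow j hj hjn).1, sub_self])]
    ring
  -- sum identity 2
  have hsum2 : ∀ x : ℝ, (∑ j ∈ Finset.Icc 1 n, a j * (x : ℂ) ^ j)
      - (starRingEnd ℂ) (∑ j ∈ Finset.Icc 1 n, b j * (x : ℂ) ^ j) = d * (x : ℂ) ^ n := by
    intro x
    rw [map_sum]
    have : ∀ j ∈ Finset.Icc 1 n,
        (starRingEnd ℂ) (b j * (x : ℂ) ^ j) = (starRingEnd ℂ) (b j) * (x : ℂ) ^ j := by
      intro j hj; rw [map_mul, map_pow, Complex.conj_ofReal]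
    rw [Finset.sum_congr rfl this, ← Finset.sum_sub_distrib]
    rw [Finset.sum_eq_single_of_mem n hmem (fun j hj hjn => by
      rw [(hlow j hj hjn).2, (hlow j hj hjn).1, sub_self])]
    ring
  -- little-o for u - v
  have huv : (fun x : ℝ => (u x - v x) - c * (x : ℂ) ^ n)
      =o[𝓝[≠] (0 : ℝ)] fun x : ℝ => x ^ n := by
    refine (hu.sub hv).congr_left fun x => ?_
    rw [← hsum1 x]; ring
  -- little-o for conj of v remainder
  have hvconj : (fun x : ℝ => (starRingEnd ℂ)
      (v x - ∑ j ∈ Finset.Icc 1 n, b j * (x : ℂ) ^ j))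
      =o[𝓝[≠] (0 : ℝ)] fun x : ℝ => x ^ n := by
    refine isLittleO_norm_left.mp (hv.norm_left.congr_left fun x => ?_)
    rw [RCLike.norm_conj]
  have huvc : (fun x : ℝ => (u x - (starRingEnd ℂ) (v x)) - d * (x : ℂ) ^ n)
      =o[𝓝[≠] (0 : ℝ)] fun x : ℝ => x ^ n := by
    refine (hu.sub hvconj).congr_left fun x => ?_
    rw [map_sub, ← hsum2 x]; ring
  have t1 := ((continuous_norm.tendsto c).comp (aux_tendsto_div huv))
  have t2 := ((continuous_norm.tendsto d).comp (aux_tendsto_div huvc))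
  have hdim : 0 < d.im + 0 := by
    have : d.im = (a n).im + (b n).im := by
      simp [hd, Complex.sub_im, Complex.conj_im]
    simp [this]; linarith
  have hd0 : d ≠ 0 := fun h => by simp [h] at hdim
  have habsd : ‖d‖ ≠ 0 := by simpa using hd0
  have hlt : ‖c‖ < ‖d‖ := by
    have hsq : ‖c‖ ^ 2 < ‖d‖ ^ 2 := by
      rw [Complex.sq_norm, Complex.sq_norm, Complex.normSq_apply, Complex.normSq_apply]
      have hre : c.re = d.re := by
        simp [hc, hd, Complex.sub_re, Complex.conj_re]
      have hcim : c.im = (a n).im - (b n).im := by simp [hc, Complex.sub_im]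
      have hdim2 : d.im = (a n).im + (b n).im := by
        simp [hd, Complex.sub_im, Complex.conj_im]
      rw [hre, hcim, hdim2]
      nlinarith
    nlinarith [norm_nonneg c, norm_nonneg d, hsq]
  refine ⟨?_, (div_lt_one (lt_of_le_of_lt (norm_nonneg c) hlt)).mpr hlt⟩
  refine (t1.div t2 habsd).congr' ?_
  filter_upwards [eventually_mem_nhdsWithin] with x hx
  have hx0 : x ≠ 0 := by simpa using hx
  have hp : ‖(x : ℂ) ^ n‖ ≠ 0 := by
    simpa using pow_ne_zero n (Complex.ofReal_ne_zero.mpr hx0)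
  show ‖(u x - v x) / (x:ℂ)^n‖ / ‖(u x - (starRingEnd ℂ) (v x)) / (x:ℂ)^n‖ = _
  rw [norm_div, norm_div]
  rw [div_div_div_cancel_right₀ _ _]
  exact hp
end
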